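/- Let β ∈ [0,1), set K = K₁² + 2K₂ + K₁²K₂², and suppose 0 < η ≤ m^β. For any Θ ∈ (ℝ^d)^m, let Θ⁺ = Θ − η∇_Θ L(Θ). Then | L(Θ⁺) − ( L(Θ) − η·Q(Θ) ) | ≤ (η² K/(2 m^{2β−1}))·‖∇_Θ L(Θ)‖₂², where Q(Θ) = ⟨∇_f L(f_Θ), T_{k_Θ}∇_f L(f_Θ)⟩_{L₂(ν_n^X)} = ‖(1/n) Σ_{i=1}^n g_Θ(x_i)·∇_Θ f_Θ(x_i)‖₂². -/

import Mathlib

open MeasureTheory Real Finset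
open scoped RealInnerProductSpace BigOperators

noncomputable section

/-- Two-layer network `f_Θ(x) = m^{-β} ∑_r a_r σ(θ_rᵀ x)`. -/
def fnet (d m : ℕ) (β : ℝ) (σ : ℝ → ℝ) (a : Fin m → ℝ)
    (Θ : Fin m → EuclideanSpace ℝ (Fin d)) (x : EuclideanSpace ℝ (Fin d)) : ℝ :=
  (m : ℝ) ^ (-β) * ∑ r, a r * σ ⟪Θ r, x⟫

/-- Functional-gradient value `g_Θ(x_i) = -y_i/(1+exp(y_i f_Θ(x_i)))`. -/
def gval (d m n : ℕ) (β : ℝ) (σ : ℝ → ℝ) (a : Fin m → ℝ)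
    (x : Fin n → EuclideanSpace ℝ (Fin d)) (y : Fin n → ℝ)
    (Θ : Fin m → EuclideanSpace ℝ (Fin d)) (i : Fin n) : ℝ :=
  - y i / (1 + Real.exp (y i * fnet d m β σ a Θ (x i)))

/-- Empirical logistic loss `L(Θ)`. -/
def eloss (d m n : ℕ) (β : ℝ) (σ : ℝ → ℝ) (a : Fin m → ℝ)
    (x : Fin n → EuclideanSpace ℝ (Fin d)) (y : Fin n → ℝ)
    (Θ : Fin m → EuclideanSpace ℝ (Fin d)) : ℝ :=
  (1 / n : ℝ) * ∑ i, Real.log (1 + Real.exp (- y i * fnet d m β σ a Θ (x i)))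

/-- `L¹(ν_n)`-norm of the functional gradient. -/
def L1norm (d m n : ℕ) (β : ℝ) (σ : ℝ → ℝ) (a : Fin m → ℝ)
    (x : Fin n → EuclideanSpace ℝ (Fin d)) (y : Fin n → ℝ)
    (Θ : Fin m → EuclideanSpace ℝ (Fin d)) : ℝ :=
  (1 / n : ℝ) * ∑ i, |gval d m n β σ a x y Θ i|

/-- Parameter gradient `∇_Θ L(Θ)`. -/
def gradL (d m n : ℕ) (β : ℝ) (σ : ℝ → ℝ) (a : Fin m → ℝ)
    (x : Fin n → EuclideanSpace ℝ (Fin d)) (y : Fin n → ℝ)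
    (Θ : Fin m → EuclideanSpace ℝ (Fin d)) : Fin m → EuclideanSpace ℝ (Fin d) :=
  fun r => (1 / n : ℝ) • ∑ i,
    (gval d m n β σ a x y Θ i * (a r * (m : ℝ) ^ (-β) * deriv σ ⟪Θ r, x i⟫)) • x i

/-- Squared Euclidean norm of a parameter block `‖Θ‖₂²`. -/
def nsq (d m : ℕ) (Θ : Fin m → EuclideanSpace ℝ (Fin d)) : ℝ := ∑ r, ‖Θ r‖ ^ 2

/-- Euclidean norm of a parameter block `‖Θ‖₂`. -/
def en2 (d m : ℕ) (Θ : Fin m → EuclideanSpace ℝ (Fin d)) : ℝ := Real.sqrt (nsq d m Θ)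

/-- The `(2,1)`-norm `‖Θ‖_{2,1} = ∑_r ‖θ_r‖₂`. -/
def n21 (d m : ℕ) (Θ : Fin m → EuclideanSpace ℝ (Fin d)) : ℝ := ∑ r, ‖Θ r‖

/-- Gradient-descent iterates `Θ^{(t+1)} = Θ^{(t)} - η ∇_Θ L(Θ^{(t)})`. -/
def gdSeq (d m n : ℕ) (β : ℝ) (σ : ℝ → ℝ) (a : Fin m → ℝ)
    (x : Fin n → EuclideanSpace ℝ (Fin d)) (y : Fin n → ℝ) (η : ℝ)
    (Θ0 : Fin m → EuclideanSpace ℝ (Fin d)) : ℕ → Fin m → EuclideanSpace ℝ (Fin d)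
  | 0 => Θ0
  | t + 1 => fun r => gdSeq d m n β σ a x y η Θ0 t r
      - η • gradL d m n β σ a x y (gdSeq d m n β σ a x y η Θ0 t) r

/-- Kernel-smoothing quantity `Q(Θ) = ‖(1/n) ∑_i g_Θ(x_i) ∇_Θ f_Θ(x_i)‖₂²`. -/
def Qker (d m n : ℕ) (β : ℝ) (σ : ℝ → ℝ) (a : Fin m → ℝ)
    (x : Fin n → EuclideanSpace ℝ (Fin d)) (y : Fin n → ℝ)
    (Θ : Fin m → EuclideanSpace ℝ (Fin d)) : ℝ :=
  nsq d m (fun r => (1 / n : ℝ) • ∑ i,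
    (gval d m n β σ a x y Θ i * (a r * (m : ℝ) ^ (-β) * deriv σ ⟪Θ r, x i⟫)) • x i)

/-- Symmetric signs: `a_r = 1` for `r < k`, `a_r = -1` for `r ≥ k` (with `m = 2k`). -/
def symSigns (k : ℕ) : Fin (2 * k) → ℝ := fun r => if (r : ℕ) < k then 1 else -1

/-- Symmetric initialization: `θ^{(0)}_{r+k} = θ^{(0)}_r` (with `m = 2k`). -/
def symInit (d k : ℕ) (ω : Fin k → EuclideanSpace ℝ (Fin d)) :
    Fin (2 * k) → EuclideanSpace ℝ (Fin d) :=
  fun r => if h : (r : ℕ) < k then ω ⟨r, h⟩ else ω ⟨(r : ℕ) - k, by have := r.isLt; omega⟩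

/-- Ramp loss with margin `γ`. -/
def ramp (γ v : ℝ) : ℝ := if v < 0 then 1 else if v ≤ γ then 1 - v / γ else 0

/-- Empirical Rademacher complexity of the ramp-loss class over the ball of radius `D`
around `Θ0`. -/
def rade (d m n : ℕ) (β γ D : ℝ) (σ : ℝ → ℝ) (a : Fin m → ℝ)
    (x : Fin n → EuclideanSpace ℝ (Fin d)) (y : Fin n → ℝ)
    (Θ0 : Fin m → EuclideanSpace ℝ (Fin d)) : ℝ :=
  (1 / n : ℝ) * (1 / 2 ^ n : ℝ) * ∑ ε : Fin n → Bool,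
    sSup {z : ℝ | ∃ Θ : Fin m → EuclideanSpace ℝ (Fin d),
      en2 d m (fun r => Θ r - Θ0 r) ≤ D ∧
      z = ∑ i, (if ε i then (1 : ℝ) else -1) * ramp γ (y i * fnet d m β σ a Θ (x i))}

/-- Neural tangent kernel. -/
def kNTK (d : ℕ) (σ : ℝ → ℝ) (μ₀ : Measure (EuclideanSpace ℝ (Fin d)))
    (x x' : EuclideanSpace ℝ (Fin d)) : ℝ :=
  ∫ θ, deriv σ ⟪θ, x⟫ * deriv σ ⟪θ, x'⟫ * ⟪x, x'⟫ ∂μ₀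


lemma lip_of_deriv_bound {f : ℝ → ℝ} {C : ℝ} (hf : Differentiable ℝ f)
    (hC : ∀ z, |deriv f z| ≤ C) (u v : ℝ) : |f u - f v| ≤ C * |u - v| := by
  have := Convex.norm_image_sub_le_of_norm_deriv_le (s := Set.univ)
    (fun z _ => hf z) (fun z _ => hC z) convex_univ (Set.mem_univ v) (Set.mem_univ u)
  simpa [Real.norm_eq_abs] using this

lemma hasDerivAt_lossTerm (y z : ℝ) :
    HasDerivAt (fun w => Real.log (1 + Real.exp (-y * w))) (-y / (1 + Real.exp (y * z))) z := by
  have h1 : HasDerivAt (fun w => -y * w) (-y) z := by simpa using (hasDerivAt_id z).const_mul (-y)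
  have h3 : HasDerivAt (fun w => 1 + Real.exp (-y * w)) (Real.exp (-y*z) * (-y)) z :=
    h1.exp.const_add 1
  have hpos : (0:ℝ) < 1 + Real.exp (-y*z) := by positivity
  have h4 := h3.log (ne_of_gt hpos)
  convert h4 using 1
  have hkey : Real.exp (y*z) * Real.exp (-y*z) = 1 := by
    rw [← Real.exp_add]; ring_nf; exact Real.exp_zero
  rw [div_eq_div_iff (by positivity) (ne_of_gt hpos)]
  linear_combination y * hkey

lemma hasDerivAt_gfun (y z : ℝ) :
    HasDerivAt (fun w => -y / (1 + Real.exp (y * w)))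
      (y^2 * Real.exp (y*z) / (1 + Real.exp (y*z))^2) z := by
  have h1 : HasDerivAt (fun w => y * w) y z := by simpa using (hasDerivAt_id z).const_mul y
  have h2 : HasDerivAt (fun w => 1 + Real.exp (y*w)) (Real.exp (y*z) * y) z := h1.exp.const_add 1
  have hne : (1 + Real.exp (y*z)) ≠ 0 := by positivity
  have := (hasDerivAt_const z (-y)).div h2 hne
  refine this.congr_deriv ?_
  ring

lemma gfun_lip {y : ℝ} (hy : y = 1 ∨ y = -1) (u v : ℝ) :
    |(-y / (1 + Real.exp (y * u))) - (-y / (1 + Real.exp (y * v)))| ≤ (1/4) * |u - v| := by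
  have hy2 : y^2 = 1 := by rcases hy with h | h <;> simp [h]
  have hdiff : Differentiable ℝ (fun w => -y/(1+Real.exp (y*w))) :=
    fun z => (hasDerivAt_gfun y z).differentiableAt
  have hb : ∀ z, |deriv (fun w => -y/(1+Real.exp (y*w))) z| ≤ (1/4) := by
    intro z
    rw [(hasDerivAt_gfun y z).deriv, hy2, one_mul]
    have he := Real.exp_pos (y*z)
    rw [abs_of_nonneg (by positivity), div_le_iff₀ (by positivity)]
    nlinarith [sq_nonneg (1 - Real.exp (y*z))]
  exact lip_of_deriv_bound hdiff hb u v

lemma gfun_abs_le {y : ℝ} (hy : y = 1 ∨ y = -1) (z : ℝ) :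
    |(-y / (1 + Real.exp (y * z)))| ≤ 1 := by
  have he := Real.exp_pos (y*z)
  rw [abs_div]
  have h1 : |(-y)| = 1 := by rcases hy with h | h <;> simp [h]
  rw [h1, abs_of_pos (by positivity), div_le_one (by positivity)]
  linarith

set_option maxHeartbeats 1000000 in
/-- Proposition 3-(i): gradient descent step behaves like a kernel-smoothed
functional gradient step. -/
theorem gd_step_kernel_smoothing
    (d m n : ℕ) (hm : 0 < m) (hn : 0 < n)
    (σ : ℝ → ℝ) (K₁ K₂ : ℝ)
    (hσ : ContDiff ℝ 2 σ)
    (hK₁ : ∀ z, |deriv σ z| ≤ K₁)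
    (hK₂ : ∀ z, |deriv (deriv σ) z| ≤ K₂)
    (a : Fin m → ℝ) (ha : ∀ r, a r = 1 ∨ a r = -1)
    (x : Fin n → EuclideanSpace ℝ (Fin d)) (y : Fin n → ℝ)
    (hx : ∀ i, ‖x i‖ ≤ 1) (hy : ∀ i, y i = 1 ∨ y i = -1)
    (β η : ℝ) (hβ0 : 0 ≤ β) (hβ1 : β < 1)
    (hη0 : 0 < η) (hη : η ≤ (m : ℝ) ^ β)
    (Θ : Fin m → EuclideanSpace ℝ (Fin d)) :
    |eloss d m n β σ a x y
        (fun r => Θ r - η • gradL d m n β σ a x y Θ r) -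
      (eloss d m n β σ a x y Θ - η * Qker d m n β σ a x y Θ)| ≤
    η ^ 2 * (K₁ ^ 2 + 2 * K₂ + K₁ ^ 2 * K₂ ^ 2) / (2 * (m : ℝ) ^ (2 * β - 1)) *
      nsq d m (gradL d m n β σ a x y Θ) := by
  have hK1nn : 0 ≤ K₁ := le_trans (abs_nonneg _) (hK₁ 0)
  have hK2nn : 0 ≤ K₂ := le_trans (abs_nonneg _) (hK₂ 0)
  have hm1 : (1:ℝ) ≤ (m:ℝ) := by exact_mod_cast hm
  have hmpos : (0:ℝ) < (m:ℝ) := by positivity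
  have hmb : (0:ℝ) < (m:ℝ)^(-β) := Real.rpow_pos_of_pos hmpos _
  have hσd : Differentiable ℝ σ := hσ.differentiable (by norm_num)
  have hσ'd : Differentiable ℝ (deriv σ) := by
    have h2 : ContDiff ℝ (1+1) σ := by norm_num at hσ ⊢; exact hσ
    exact (contDiff_succ_iff_deriv.mp h2).2.2.differentiable (by norm_num)
  have hσlip : ∀ u w, |σ u - σ w| ≤ K₁ * |u - w| := lip_of_deriv_bound hσd hK₁
  have hσ'lip : ∀ u w, |deriv σ u - deriv σ w| ≤ K₂ * |u - w| := lip_of_deriv_bound hσ'd hK₂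
  have hardone : ∀ r, |a r| = 1 := fun r => by rcases ha r with h|h <;> simp [h]
  set v := gradL d m n β σ a x y Θ with hv
  set N := nsq d m v with hN
  have hNnn : 0 ≤ N := Finset.sum_nonneg fun r _ => by positivity
  set c : Fin m → Fin n → ℝ := fun r i => ⟪Θ r, x i⟫ with hc
  set b : Fin m → Fin n → ℝ := fun r i => η * ⟪v r, x i⟫ with hb
  set s : Fin n → ℝ → ℝ := fun i t => (m:ℝ)^(-β) * ∑ r, a r * σ (c r i - t * b r i) with hs
  set s' : Fin n → ℝ → ℝ :=
    fun i t => (m:ℝ)^(-β) * ∑ r, a r * (deriv σ (c r i - t * b r i) * (-(b r i))) with hs'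
  set φ : ℝ → ℝ := fun t => (1/n:ℝ) * ∑ i, Real.log (1 + Real.exp (-y i * s i t)) with hφ
  set φ' : ℝ → ℝ :=
    fun t => (1/n:ℝ) * ∑ i, (-y i/(1+Real.exp (y i * s i t))) * s' i t with hφ'
  -- (F1) identification with eloss
  have hinner : ∀ (t : ℝ) (r : Fin m) (i : Fin n),
      ⟪Θ r - (t*η) • v r, x i⟫ = c r i - t * b r i := by
    intro t r i
    rw [inner_sub_left, real_inner_smul_left, hc, hb]
    ring
  have heq : ∀ t : ℝ, eloss d m n β σ a x y (fun r => Θ r - (t*η) • v r) = φ t := by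
    intro t
    unfold eloss fnet
    rw [hφ]
    simp only [hinner, hs]
  have h1 : eloss d m n β σ a x y (fun r => Θ r - η • v r) = φ 1 := by
    rw [← heq 1]; norm_num
  have h0 : eloss d m n β σ a x y Θ = φ 0 := by
    rw [← heq 0]
    congr 1
    funext r
    simp
  have hs0 : ∀ i, s i 0 = fnet d m β σ a Θ (x i) := by
    intro i; rw [hs]; unfold fnet; simp [hc]
  -- (F2) derivative of s
  have hsd : ∀ i t, HasDerivAt (s i) (s' i t) t := by
    intro i t
    rw [hs, hs']
    refine HasDerivAt.const_mul _ (HasDerivAt.fun_sum fun r _ => HasDerivAt.const_mul _ ?_)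
    have hlin : HasDerivAt (fun u => c r i - u * b r i) (-(b r i)) t := by
      simpa using ((hasDerivAt_id t).mul_const (b r i)).const_sub (c r i)
    exact (hσd _).hasDerivAt.comp t hlin
  -- (F3) derivative of φ
  have hφd : ∀ t, HasDerivAt φ (φ' t) t := by
    intro t
    rw [hφ, hφ']
    refine HasDerivAt.const_mul _ (HasDerivAt.fun_sum fun i _ => ?_)
    have := (hasDerivAt_lossTerm (y i) (s i t)).comp t (hsd i t)
    exact this
  -- bounds
  have hbb : ∀ (r : Fin m) (i : Fin n), |b r i| ≤ η * ‖v r‖ := by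
    intro r i
    rw [hb, abs_mul, abs_of_pos hη0]
    refine mul_le_mul_of_nonneg_left ?_ hη0.le
    calc |⟪v r, x i⟫| ≤ ‖v r‖ * ‖x i‖ := abs_real_inner_le_norm _ _
      _ ≤ ‖v r‖ * 1 := by gcongr; exact hx i
      _ = ‖v r‖ := mul_one _
  have hsum_norm : ∑ r, ‖v r‖ ≤ Real.sqrt m * Real.sqrt N := by
    have h2 : (∑ r, ‖v r‖)^2 ≤ (m:ℝ) * N := by
      have := sq_sum_le_card_mul_sum_sq (s := Finset.univ) (f := fun r => ‖v r‖)
      simpa [hN, nsq] using this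
    have hnn : 0 ≤ ∑ r, ‖v r‖ := Finset.sum_nonneg fun r _ => norm_nonneg _
    calc ∑ r, ‖v r‖ = Real.sqrt ((∑ r, ‖v r‖)^2) := (Real.sqrt_sq hnn).symm
      _ ≤ Real.sqrt ((m:ℝ) * N) := Real.sqrt_le_sqrt h2
      _ = Real.sqrt m * Real.sqrt N := Real.sqrt_mul (by positivity) N
  set S := K₁ * η * (Real.sqrt m * Real.sqrt N) * (m:ℝ)^(-β) with hS
  have hSnn : 0 ≤ S := by positivity
  have hs'bd : ∀ i t, |s' i t| ≤ S := by
    intro i t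
    rw [hs', abs_mul, abs_of_pos hmb]
    calc (m:ℝ)^(-β) * |∑ r, a r * (deriv σ (c r i - t * b r i) * (-(b r i)))|
        ≤ (m:ℝ)^(-β) * ∑ r, K₁ * (η * ‖v r‖) := by
          refine mul_le_mul_of_nonneg_left
            ((Finset.abs_sum_le_sum_abs _ _).trans (Finset.sum_le_sum fun r _ => ?_)) hmb.le
          rw [abs_mul, hardone, one_mul, abs_mul, abs_neg]
          exact mul_le_mul (hK₁ _) (hbb r i) (abs_nonneg _) hK1nn
      _ = (m:ℝ)^(-β) * (K₁ * η * ∑ r, ‖v r‖) := by rw [← Finset.mul_sum, ← Finset.mul_sum]; ring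
      _ ≤ (m:ℝ)^(-β) * (K₁ * η * (Real.sqrt m * Real.sqrt N)) := by
          have := mul_le_mul_of_nonneg_left hsum_norm (by positivity : (0:ℝ) ≤ K₁ * η)
          exact mul_le_mul_of_nonneg_left this hmb.le
      _ = S := by rw [hS]; ring
  have hslip : ∀ i t, |s i t - s i 0| ≤ S * |t| := by
    intro i t
    have hdiff : s i t - s i 0
        = (m:ℝ)^(-β) * ∑ r, a r * (σ (c r i - t * b r i) - σ (c r i - 0 * b r i)) := by
      rw [hs]
      simp only [mul_sub, Finset.sum_sub_distrib]
    rw [hdiff, abs_mul, abs_of_pos hmb]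
    calc (m:ℝ)^(-β) * |∑ r, a r * (σ (c r i - t * b r i) - σ (c r i - 0 * b r i))|
        ≤ (m:ℝ)^(-β) * ∑ r, K₁ * (η * ‖v r‖) * |t| := by
          refine mul_le_mul_of_nonneg_left
            ((Finset.abs_sum_le_sum_abs _ _).trans (Finset.sum_le_sum fun r _ => ?_)) hmb.le
          rw [abs_mul, hardone, one_mul]
          calc |σ (c r i - t * b r i) - σ (c r i - 0 * b r i)|
              ≤ K₁ * |(c r i - t * b r i) - (c r i - 0 * b r i)| := hσlip _ _
            _ = K₁ * (|t| * |b r i|) := by rw [show (c r i - t * b r i) - (c r i - 0 * b r i) = -(t * b r i) by ring, abs_neg, abs_mul]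
            _ ≤ K₁ * (|t| * (η * ‖v r‖)) := by
                refine mul_le_mul_of_nonneg_left (mul_le_mul_of_nonneg_left (hbb r i) (abs_nonneg _)) hK1nn
            _ = K₁ * (η * ‖v r‖) * |t| := by ring
      _ = (m:ℝ)^(-β) * (K₁ * η * (∑ r, ‖v r‖)) * |t| := by rw [← Finset.sum_mul, ← Finset.mul_sum, ← Finset.mul_sum]; ring
      _ ≤ (m:ℝ)^(-β) * (K₁ * η * (Real.sqrt m * Real.sqrt N)) * |t| := by
          have h1 := mul_le_mul_of_nonneg_left hsum_norm (by positivity : (0:ℝ) ≤ K₁ * η)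
          have h2 := mul_le_mul_of_nonneg_left h1 hmb.le
          exact mul_le_mul_of_nonneg_right h2 (abs_nonneg _)
      _ = S * |t| := by rw [hS]; ring
  set C₂ := K₂ * η^2 * N * (m:ℝ)^(-β) with hC₂
  have hC₂nn : 0 ≤ C₂ := by positivity
  have hs'lip : ∀ i t, |s' i t - s' i 0| ≤ C₂ * |t| := by
    intro i t
    have hdiff : s' i t - s' i 0 = (m:ℝ)^(-β) * ∑ r,
        a r * ((deriv σ (c r i - t * b r i) - deriv σ (c r i - 0 * b r i)) * (-(b r i))) := by
      rw [hs']
      simp only [mul_sub, sub_mul, Finset.sum_sub_distrib]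
    rw [hdiff, abs_mul, abs_of_pos hmb]
    calc (m:ℝ)^(-β) * |∑ r, a r * ((deriv σ (c r i - t * b r i) - deriv σ (c r i - 0 * b r i)) * (-(b r i)))|
        ≤ (m:ℝ)^(-β) * ∑ r, K₂ * (η * ‖v r‖)^2 * |t| := by
          refine mul_le_mul_of_nonneg_left
            ((Finset.abs_sum_le_sum_abs _ _).trans (Finset.sum_le_sum fun r _ => ?_)) hmb.le
          rw [abs_mul, hardone, one_mul, abs_mul, abs_neg]
          calc |deriv σ (c r i - t * b r i) - deriv σ (c r i - 0 * b r i)| * |b r i|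
              ≤ (K₂ * (|t| * |b r i|)) * |b r i| := by
                refine mul_le_mul_of_nonneg_right ?_ (abs_nonneg _)
                calc |deriv σ (c r i - t * b r i) - deriv σ (c r i - 0 * b r i)|
                    ≤ K₂ * |(c r i - t * b r i) - (c r i - 0 * b r i)| := hσ'lip _ _
                  _ = K₂ * (|t| * |b r i|) := by rw [show (c r i - t * b r i) - (c r i - 0 * b r i) = -(t * b r i) by ring, abs_neg, abs_mul]
            _ = K₂ * |b r i|^2 * |t| := by ring
            _ ≤ K₂ * (η * ‖v r‖)^2 * |t| := by
                refine mul_le_mul_of_nonneg_right (mul_le_mul_of_nonneg_left ?_ hK2nn) (abs_nonneg _)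
                exact pow_le_pow_left₀ (abs_nonneg _) (hbb r i) 2
      _ = C₂ * |t| := by
          rw [hC₂, hN]; unfold nsq
          simp only [Finset.mul_sum, Finset.sum_mul]
          exact Finset.sum_congr rfl fun r _ => by ring
  -- (F6) Lipschitz bound on φ'
  set C := S^2/4 + C₂ with hCdef
  have hφ'lip : ∀ t : ℝ, |φ' t - φ' 0| ≤ C * |t| := by
    intro t
    have hterm : ∀ i : Fin n,
        |(-y i/(1+Real.exp (y i * s i t))) * s' i t - (-y i/(1+Real.exp (y i * s i 0))) * s' i 0|
          ≤ C * |t| := by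
      intro i
      have hGlip := gfun_lip (hy i) (s i t) (s i 0)
      have hG0 := gfun_abs_le (hy i) (s i 0)
      have e1 : (-y i/(1+Real.exp (y i * s i t))) * s' i t - (-y i/(1+Real.exp (y i * s i 0))) * s' i 0
          = ((-y i/(1+Real.exp (y i * s i t))) - (-y i/(1+Real.exp (y i * s i 0)))) * s' i t
            + (-y i/(1+Real.exp (y i * s i 0))) * (s' i t - s' i 0) := by ring
      rw [e1]
      calc _ ≤ |((-y i/(1+Real.exp (y i * s i t))) - (-y i/(1+Real.exp (y i * s i 0)))) * s' i t|
            + |(-y i/(1+Real.exp (y i * s i 0))) * (s' i t - s' i 0)| := abs_add_le _ _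
        _ ≤ (1/4 * |s i t - s i 0|) * S + 1 * (C₂ * |t|) := by
            rw [abs_mul (((-y i/(1+Real.exp (y i * s i t))) - (-y i/(1+Real.exp (y i * s i 0))))) (s' i t),
              abs_mul (-y i/(1+Real.exp (y i * s i 0))) (s' i t - s' i 0)]
            exact add_le_add
              (mul_le_mul hGlip (hs'bd i t) (abs_nonneg _) (by positivity))
              (mul_le_mul hG0 (hs'lip i t) (abs_nonneg _) one_pos.le)
        _ ≤ (1/4 * (S * |t|)) * S + 1 * (C₂ * |t|) := by
            refine add_le_add (mul_le_mul_of_nonneg_right ?_ hSnn) le_rfl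
            exact mul_le_mul_of_nonneg_left (hslip i t) (by norm_num)
        _ = C * |t| := by rw [hCdef]; ring
    have hne : (n:ℝ) ≠ 0 := by positivity
    rw [hφ']
    rw [← mul_sub, ← Finset.sum_sub_distrib, abs_mul]
    calc |(1/n:ℝ)| * |∑ i, ((-y i/(1+Real.exp (y i * s i t))) * s' i t - (-y i/(1+Real.exp (y i * s i 0))) * s' i 0)|
        ≤ (1/n:ℝ) * ∑ i, (C * |t|) := by
          rw [abs_of_pos (by positivity)]
          refine mul_le_mul_of_nonneg_left
            ((Finset.abs_sum_le_sum_abs _ _).trans (Finset.sum_le_sum fun i _ => hterm i))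
            (by positivity)
      _ = C * |t| := by
          rw [Finset.sum_const, Finset.card_univ, Fintype.card_fin, nsmul_eq_mul]
          field_simp
  -- (F7) φ' 0 = -(η * N)
  have hcri : ∀ (r : Fin m) (i : Fin n), c r i = ⟪Θ r, x i⟫ := fun _ _ => rfl
  have hφ'0 : φ' 0 = -(η * N) := by
    have hg : ∀ i, (-y i/(1+Real.exp (y i * s i 0))) = gval d m n β σ a x y Θ i := by
      intro i; rw [hs0]; unfold gval; rw [neg_div]
    have hvr : ∀ r : Fin m, ‖v r‖^2
        = (1/n:ℝ) * ∑ i, (gval d m n β σ a x y Θ i * (a r * (m:ℝ)^(-β) * deriv σ (c r i))) * ⟪v r, x i⟫ := by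
      intro r
      rw [← real_inner_self_eq_norm_sq]
      nth_rewrite 2 [hv]
      rw [show gradL d m n β σ a x y Θ r = (1/n:ℝ) • ∑ i,
        (gval d m n β σ a x y Θ i * (a r * (m:ℝ)^(-β) * deriv σ ⟪Θ r, x i⟫)) • x i from rfl]
      rw [real_inner_smul_right, inner_sum]
      simp only [real_inner_smul_right, hcri]
    rw [hφ']
    calc (1/n:ℝ) * ∑ i, (-y i/(1+Real.exp (y i * s i 0))) * s' i 0
        = (1/n:ℝ) * ∑ i, ∑ r, (-η) * ((gval d m n β σ a x y Θ i
            * (a r * (m:ℝ)^(-β) * deriv σ (c r i))) * ⟪v r, x i⟫) := by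
          congr 1
          refine Finset.sum_congr rfl fun i _ => ?_
          rw [hg i, hs']
          simp only [hb, zero_mul, sub_zero, Finset.mul_sum]
          refine Finset.sum_congr rfl fun r _ => by ring
      _ = -η * ((1/n:ℝ) * ∑ r, ∑ i, (gval d m n β σ a x y Θ i
            * (a r * (m:ℝ)^(-β) * deriv σ (c r i))) * ⟪v r, x i⟫) := by
          rw [Finset.sum_comm]
          simp only [← Finset.mul_sum]
          ring
      _ = -η * ((1/n:ℝ) * ∑ r, (n:ℝ) * ‖v r‖^2) := by
          congr 1
          rw [Finset.mul_sum, Finset.mul_sum]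
          refine Finset.sum_congr rfl fun r _ => ?_
          rw [hvr r]
          have hne : (n:ℝ) ≠ 0 := by positivity
          field_simp
          exact Finset.sum_congr rfl fun _ _ => by ring
      _ = -(η * N) := by
          rw [hN]; unfold nsq
          rw [Finset.mul_sum, ← Finset.mul_sum]
          have hne : (n:ℝ) ≠ 0 := by positivity
          field_simp
          rw [← Finset.mul_sum]
  -- (F8) Taylor estimate
  have key : |φ 1 - φ 0 - φ' 0| ≤ C / 2 := by
    set ψ : ℝ → ℝ := fun t => φ t - φ 0 - t * φ' 0 with hψ
    have hψd : ∀ t, HasDerivAt ψ (φ' t - φ' 0) t := by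
      intro t
      have := ((hφd t).sub_const (φ 0)).sub ((hasDerivAt_id t).mul_const (φ' 0))
      exact this.congr_deriv (by ring)
    have hB : ∀ u : ℝ, HasDerivAt (fun w : ℝ => C * w^2/2) (C * u) u := by
      intro u
      have := ((hasDerivAt_pow 2 u).const_mul C).div_const 2
      refine this.congr_deriv ?_
      ring
    have hmain := image_norm_le_of_norm_deriv_right_le_deriv_boundary
      (f := ψ) (f' := fun t => φ' t - φ' 0) (a := 0) (b := 1)
      (fun u _ => (hψd u).differentiableAt.continuousAt.continuousWithinAt)
      (fun u _ => (hψd u).hasDerivWithinAt)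
      (B := fun w => C * w^2/2) (B' := fun w => C * w)
      (by simp [hψ]) hB
      (fun u hu => by
        have h := hφ'lip u
        rw [abs_of_nonneg hu.1] at h
        simpa [Real.norm_eq_abs] using h)
    have h := hmain (Set.right_mem_Icc.mpr zero_le_one)
    simpa [hψ, Real.norm_eq_abs] using h
  -- final chaining
  have hQ : Qker d m n β σ a x y Θ = N := rfl
  have hfinal : C / 2 ≤ η ^ 2 * (K₁ ^ 2 + 2 * K₂ + K₁ ^ 2 * K₂ ^ 2) / (2 * (m : ℝ) ^ (2 * β - 1)) * N := by
    set A := (m:ℝ)^((1:ℝ)-2*β) with hA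
    have hApos : (0:ℝ) < A := Real.rpow_pos_of_pos hmpos _
    have hle : (m:ℝ)^(-β) ≤ A := Real.rpow_le_rpow_of_exponent_le hm1 (by linarith)
    have hmA : (m:ℝ)^(2*β-1) = A⁻¹ := by
      rw [hA, ← Real.rpow_neg hmpos.le]
      congr 1; ring
    have hS2 : S^2 = K₁^2 * η^2 * N * A := by
      have h1 : ((1:ℝ) - 2*β) = 1 + (-β + -β) := by ring
      rw [hS, hA, h1, Real.rpow_add hmpos, Real.rpow_one, Real.rpow_add hmpos]
      rw [mul_pow, mul_pow, mul_pow, mul_pow, Real.sq_sqrt hmpos.le, Real.sq_sqrt hNnn]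
      ring
    have hrw : η ^ 2 * (K₁ ^ 2 + 2 * K₂ + K₁ ^ 2 * K₂ ^ 2) / (2 * (m : ℝ) ^ (2 * β - 1)) * N
        = η ^ 2 * (K₁ ^ 2 + 2 * K₂ + K₁ ^ 2 * K₂ ^ 2) * A * N / 2 := by
      rw [hmA]
      field_simp
    rw [hrw, hCdef, hS2, hC₂]
    have h2 : K₂ * η^2 * N * (m:ℝ)^(-β) ≤ K₂ * η^2 * N * A :=
      mul_le_mul_of_nonneg_left hle (by positivity)
    linarith [mul_nonneg (mul_nonneg (mul_nonneg (sq_nonneg K₁) (sq_nonneg η)) hNnn) hApos.le,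
      mul_nonneg (mul_nonneg (mul_nonneg (mul_nonneg (sq_nonneg K₁) (sq_nonneg K₂)) (sq_nonneg η)) hNnn) hApos.le,
      mul_nonneg (mul_nonneg (mul_nonneg hK2nn (sq_nonneg η)) hNnn) hApos.le, h2]
  calc |eloss d m n β σ a x y (fun r => Θ r - η • v r) - (eloss d m n β σ a x y Θ - η * Qker d m n β σ a x y Θ)|
      = |φ 1 - φ 0 - φ' 0| := by rw [h1, h0, hQ, hφ'0]; congr 1; ring
    _ ≤ C / 2 := key
    _ ≤ _ := hfinal
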